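/- Let 𝒰 be a real vector space, (V_acc, V_des) a background on 𝒰, (M_acc, M_des) an AD-model respecting this background, and φ : 𝒰 → 𝒰 an event (linear, idempotent, with φ(V_acc) ⊆ V_acc) that is regular (V_des ∩ I_φ = ∅) and such that 0 ∉ (M_acc⦀φ) + V_des. Define N_acc := M_acc⦀φ and N_des := (M_des⦀φ) ∪ (V_des + (M_acc⦀φ)). Then (N_acc, N_des) is again an AD-model respecting the background, i.e. V_acc ⊆ N_acc, V_des ⊆ N_des, N_des ⊆ N_acc, 0 ∉ N_des, N_acc and N_des are convex cones, and N_acc + N_des ⊆ N_des; and moreover I_φ ⊆ N_acc. -/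

import Mathlib

open Pointwise

/-- `posi S`: all strictly positive finite linear combinations of elements of `S`. -/
def posi {V : Type*} [AddCommGroup V] [Module ℝ V] (S : Set V) : Set V :=
  {u | ∃ n : ℕ, 0 < n ∧ ∃ (lam : Fin n → ℝ) (w : Fin n → V),
    (∀ k, 0 < lam k) ∧ (∀ k, w k ∈ S) ∧ u = ∑ k, lam k • w k}

/-- `condon K φ = K⦀φ`: the options whose called-off version under `φ` lies in `K`. -/
def condon {V : Type*} [AddCommGroup V] [Module ℝ V] (K : Set V) (φ : V →ₗ[ℝ] V) : Set V :=
  {u | φ u ∈ K}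

lemma subset_posi {V : Type*} [AddCommGroup V] [Module ℝ V] {S : Set V} :
    S ⊆ posi S := fun a ha =>
  ⟨1, one_pos, fun _ => 1, fun _ => a, fun _ => one_pos, fun _ => ha, by simp⟩

lemma smul_mem_of_posi {V : Type*} [AddCommGroup V] [Module ℝ V] {S : Set V}
    (h : posi S = S) {c : ℝ} (hc : 0 < c) {a : V} (ha : a ∈ S) : c • a ∈ S := by
  rw [← h]
  exact ⟨1, one_pos, fun _ => c, fun _ => a, fun _ => hc, fun _ => ha, by simp⟩

lemma add_mem_of_posi {V : Type*} [AddCommGroup V] [Module ℝ V] {S : Set V}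
    (h : posi S = S) {a b : V} (ha : a ∈ S) (hb : b ∈ S) : a + b ∈ S := by
  rw [← h]
  refine ⟨2, two_pos, fun _ => 1, ![a, b], fun _ => one_pos, ?_, by
    simp [Fin.sum_univ_two]⟩
  intro k
  fin_cases k <;> simpa

lemma posi_eq_self {V : Type*} [AddCommGroup V] [Module ℝ V] {S : Set V}
    (hadd : ∀ a ∈ S, ∀ b ∈ S, a + b ∈ S)
    (hsmul : ∀ c : ℝ, 0 < c → ∀ a ∈ S, c • a ∈ S) : posi S = S := by
  refine Set.Subset.antisymm ?_ subset_posi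
  rintro u ⟨n, hn, lam, w, hlam, hw, rfl⟩
  obtain ⟨m, rfl⟩ := Nat.exists_eq_succ_of_ne_zero hn.ne'
  clear hn
  induction m with
  | zero => simpa using hsmul _ (hlam 0) _ (hw 0)
  | succ m ih =>
    rw [Fin.sum_univ_succ]
    exact hadd _ (hsmul _ (hlam 0) _ (hw 0)) _
      (ih (fun i => lam i.succ) (fun i => w i.succ) (fun i => hlam i.succ)
        (fun i => hw i.succ))

theorem stmt4 {U : Type*} [AddCommGroup U] [Module ℝ U]
    (Vacc Vdes : Set U)
    (hV0acc : (0 : U) ∈ Vacc) (hV0des : (0 : U) ∉ Vdes) (hVsub : Vdes ⊆ Vacc)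
    (hVaccCone : posi Vacc = Vacc) (hVdesCone : posi Vdes = Vdes)
    (hVadd : Vacc + Vdes ⊆ Vdes)
    (Macc Mdes : Set U)
    (hMacc : Vacc ⊆ Macc) (hMdes : Vdes ⊆ Mdes) (hMsub : Mdes ⊆ Macc)
    (hM0 : (0 : U) ∉ Mdes) (hMaccCone : posi Macc = Macc) (hMdesCone : posi Mdes = Mdes)
    (hMadd : Macc + Mdes ⊆ Mdes)
    (φ : U →ₗ[ℝ] U) (hidem : φ ∘ₗ φ = φ) (hmono : ∀ u ∈ Vacc, φ u ∈ Vacc)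
    (hreg : Vdes ∩ {u : U | φ u = 0} = ∅)
    (hcond : (0 : U) ∉ condon Macc φ + Vdes)
    (Nacc Ndes : Set U)
    (hNacc : Nacc = condon Macc φ)
    (hNdes : Ndes = condon Mdes φ ∪ (Vdes + condon Macc φ)) :
    Vacc ⊆ Nacc ∧ Vdes ⊆ Ndes ∧ Ndes ⊆ Nacc ∧ (0 : U) ∉ Ndes ∧
      posi Nacc = Nacc ∧ posi Ndes = Ndes ∧ Nacc + Ndes ⊆ Ndes ∧
      {u : U | φ u = 0} ⊆ Nacc := by
  subst hNacc hNdes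
  -- basic closure facts
  have hMaccAdd : ∀ a ∈ Macc, ∀ b ∈ Macc, a + b ∈ Macc :=
    fun a ha b hb => add_mem_of_posi hMaccCone ha hb
  have hMMdes : ∀ a ∈ Macc, ∀ b ∈ Mdes, a + b ∈ Mdes :=
    fun a ha b hb => hMadd (Set.add_mem_add ha hb)
  have h0cond : (0 : U) ∈ condon Macc φ := by
    simp only [condon, Set.mem_setOf_eq, map_zero]; exact hMacc hV0acc
  have hVaccSub : Vacc ⊆ condon Macc φ := fun u hu => hMacc (hmono u hu)
  -- Nacc is a cone
  have hNaccCone : posi (condon Macc φ) = condon Macc φ := by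
    refine posi_eq_self ?_ ?_
    · intro a ha b hb
      show φ (a + b) ∈ Macc
      rw [map_add]; exact hMaccAdd _ ha _ hb
    · intro c hc a ha
      show φ (c • a) ∈ Macc
      rw [map_smul]; exact smul_mem_of_posi hMaccCone hc ha
  -- addition within Ndes
  have hNdesAdd : ∀ a ∈ condon Mdes φ ∪ (Vdes + condon Macc φ),
      ∀ b ∈ condon Mdes φ ∪ (Vdes + condon Macc φ),
      a + b ∈ condon Mdes φ ∪ (Vdes + condon Macc φ) := by
    have key : ∀ a ∈ condon Macc φ, ∀ b ∈ condon Mdes φ, a + b ∈ condon Mdes φ := by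
      intro a ha b hb
      show φ (a + b) ∈ Mdes
      rw [map_add]; exact hMMdes _ ha _ hb
    rintro a (ha | ⟨d, hd, c, hc, rfl⟩) b (hb | ⟨d', hd', c', hc', rfl⟩)
    · left
      show φ (a + b) ∈ Mdes
      rw [map_add]; exact hMMdes _ (hMsub ha) _ hb
    · left
      have hdc : d' + c' ∈ condon Macc φ := by
        show φ (d' + c') ∈ Macc
        rw [map_add]; exact hMaccAdd _ (hMacc (hmono _ (hVsub hd'))) _ hc'
      rw [add_comm]
      exact key _ hdc _ ha
    · left
      have hdc : d + c ∈ condon Macc φ := by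
        show φ (d + c) ∈ Macc
        rw [map_add]; exact hMaccAdd _ (hMacc (hmono _ (hVsub hd))) _ hc
      exact key _ hdc _ hb
    · right
      refine ⟨d + d', hVdesCone ▸ add_mem_of_posi hVdesCone hd hd', c + c',
        add_mem_of_posi hNaccCone hc hc', by simp only [add_assoc, add_comm, add_left_comm]⟩
  constructor
  · exact hVaccSub
  constructor
  · intro v hv
    right
    exact ⟨v, hv, 0, h0cond, by simp⟩
  constructor
  · rintro u (hu | ⟨d, hd, c, hc, rfl⟩)
    · exact Set.mem_setOf_eq ▸ hMsub hu
    · show φ (d + c) ∈ Macc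
      rw [map_add]; exact hMaccAdd _ (hMacc (hmono _ (hVsub hd))) _ hc
  constructor
  · rintro (h | ⟨d, hd, c, hc, h⟩)
    · exact hM0 (by simpa [condon] using h)
    · exact hcond ⟨c, hc, d, hd, by rw [← h]; abel⟩
  constructor
  · exact hNaccCone
  constructor
  · refine posi_eq_self hNdesAdd ?_
    rintro c hc a (ha | ⟨d, hd, x, hx, rfl⟩)
    · left
      show φ (c • a) ∈ Mdes
      rw [map_smul]; exact smul_mem_of_posi hMdesCone hc ha
    · right
      exact ⟨c • d, smul_mem_of_posi hVdesCone hc hd, c • x,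
        smul_mem_of_posi hNaccCone hc hx, by rw [smul_add]⟩
  constructor
  · rintro u ⟨a, ha, b, hb, rfl⟩
    rcases hb with hb | ⟨d, hd, c, hc, rfl⟩
    · left
      show φ (a + b) ∈ Mdes
      rw [map_add]; exact hMMdes _ ha _ hb
    · right
      exact ⟨d, hd, a + c, add_mem_of_posi hNaccCone ha hc, by simp only [add_assoc, add_comm, add_left_comm]⟩
  · intro u hu
    show φ u ∈ Macc
    rw [Set.mem_setOf_eq] at hu
    rw [hu]; exact hMacc hV0acc
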